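/- In the lower-bound construction: for a k-ary symbol σ ∉ {σ₀, σ₁} with μ(σ) = [1 1] ⊗ ([I_n; −I_n]^{⊗k} · B(σ)), and for j, i₁,...,i_k ∈ {0,...,n−1}, it holds that ‖A‖(σ₁^j(σ(σ₁^{i₁}(σ₀),...,σ₁^{i_k}(σ₀)))) = B(σ)_{(1+i₁,...,1+i_k), (1+n−j) mod n}, where indices (1+i₁,...,1+i_k) encode a row of B(σ) ∈ F^{n^k×n} in the standard Kronecker indexing. -/

import Mathlib

/-- Σ-trees over a ranked alphabet. -/
inductive RTree (Sig : Type) (rk : Sig → ℕ) : Type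
  | node (σ : Sig) (ts : Fin (rk σ) → RTree Sig rk) : RTree Sig rk

/-- Extension of the tree representation `μ` to trees. -/
def mtaRun {Sig : Type} {rk : Sig → ℕ} {F : Type} [Field F] {S : Type} [Fintype S]
    (μ : ∀ σ : Sig, Matrix (Fin (rk σ) → S) S F) : RTree Sig rk → S → F
  | .node σ ts => Matrix.vecMul (fun i => ∏ l, mtaRun μ (ts l) (i l)) (μ σ)

/-- The ranked alphabet of the lower-bound construction: nullary `σ₀`
(`Sum.inl false`), unary `σ₁` (`Sum.inl true`), and further symbols from `Sg`. -/
def rkA {Sg : Type} (rks : Sg → ℕ) : Bool ⊕ Sg → ℕ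
  | .inl false => 0
  | .inl true => 1
  | .inr σ => rks σ

/-- The tree `σ₀`. -/
def leaf0 {Sg : Type} (rks : Sg → ℕ) : RTree (Bool ⊕ Sg) (rkA rks) :=
  .node (.inl false) Fin.elim0

/-- The tree constructor `σ₁(·)`. -/
def s1 {Sg : Type} {rks : Sg → ℕ} (t : RTree (Bool ⊕ Sg) (rkA rks)) :
    RTree (Bool ⊕ Sg) (rkA rks) :=
  .node (.inl true) (fun _ => t)

set_option linter.unusedSectionVars false

section Aux
open Fin.NatCast Fin.CommRing
variable {Sg : Type} {rks : Sg → ℕ} {F : Type} [Field F] {n : ℕ} [NeZero n]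
    (μ : ∀ a : Bool ⊕ Sg, Matrix (Fin (rkA rks a) → Fin 2 × Fin n) (Fin 2 × Fin n) F)

lemma run_leaf0
    (hμ0 : μ (.inl false) = fun _ s => if s.1 = 0 ∧ s.2 = 0 then 1 else 0)
    (s : Fin 2 × Fin n) :
    mtaRun μ (leaf0 rks) s = if s.1 = 0 ∧ s.2 = 0 then 1 else 0 := by
  have : IsEmpty (Fin (rkA rks (.inl false))) := Fin.isEmpty'
  simp [mtaRun, leaf0, Matrix.vecMul, dotProduct, hμ0]

lemma run_s1
    (hμ1 : μ (.inl true) =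
      fun i s => if s.1 = (i ((0 : Fin 1))).1 ∧ s.2 = (i ((0 : Fin 1))).2 + 1 then 1 else 0)
    (t : RTree (Bool ⊕ Sg) (rkA rks)) (s : Fin 2 × Fin n) :
    mtaRun μ (s1 t) s = mtaRun μ t (s.1, s.2 - 1) := by
  show (Matrix.vecMul _ (μ (.inl true))) s = _
  rw [hμ1]; simp only [Matrix.vecMul]
  show (∑ i : Fin 1 → Fin 2 × Fin n, (∏ l : Fin 1, mtaRun μ t (i l)) *
      (if s.1 = (i 0).1 ∧ s.2 = (i 0).2 + 1 then 1 else 0)) = _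
  rw [Fintype.sum_equiv (Equiv.funUnique (Fin 1) (Fin 2 × Fin n)) _
    (fun p => mtaRun μ t p * (if s.1 = p.1 ∧ s.2 = p.2 + 1 then 1 else 0))
    (by intro x; simp [Equiv.funUnique])]
  have key : ∀ p : Fin 2 × Fin n, (s.1 = p.1 ∧ s.2 = p.2 + 1) ↔ p = (s.1, s.2 - 1) := by
    intro p
    constructor
    · rintro ⟨h1, h2⟩
      exact Prod.ext h1.symm (by rw [h2]; ring)
    · rintro rfl; exact ⟨rfl, by simp⟩
  simp_rw [key, mul_ite, mul_one, mul_zero]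
  simp

lemma run_s1_iter
    (hμ1 : μ (.inl true) =
      fun i s => if s.1 = (i ((0 : Fin 1))).1 ∧ s.2 = (i ((0 : Fin 1))).2 + 1 then 1 else 0)
    (m : ℕ) (t : RTree (Bool ⊕ Sg) (rkA rks)) (s : Fin 2 × Fin n) :
    mtaRun μ (s1^[m] t) s = mtaRun μ t (s.1, s.2 - (m : Fin n)) := by
  induction m generalizing s with
  | zero => simp
  | succ m ih =>
      rw [Function.iterate_succ_apply', run_s1 μ hμ1, ih]
      congr 1
      simp only [Prod.mk.injEq]
      refine ⟨trivial, ?_⟩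
      push_cast
      ring

end Aux

section Aux2
open Fin.NatCast Fin.CommRing
variable {Sg : Type} {rks : Sg → ℕ} {F : Type} [Field F] {n : ℕ} [NeZero n]
    (μ : ∀ a : Bool ⊕ Sg, Matrix (Fin (rkA rks a) → Fin 2 × Fin n) (Fin 2 × Fin n) F)
    (B : ∀ σ : Sg, Matrix (Fin (rks σ) → Fin n) (Fin n) F)

lemma run_node
    (hμ2 : ∀ σ : Sg, μ (.inr σ) =
      fun i s =>
        ∑ jv : Fin (rks σ) → Fin n,
          (∏ l, if (i l).2 = jv l then (if (i l).1 = 0 then (1 : F) else -1) else 0) *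
            B σ jv s.2)
    (σ : Sg) (iv : Fin (rks σ) → Fin n)
    (ts : Fin (rkA rks (.inr σ)) → RTree (Bool ⊕ Sg) (rkA rks))
    (h : ∀ l p, mtaRun μ (ts l) p = if p = ((0 : Fin 2), iv l) then 1 else 0)
    (s : Fin 2 × Fin n) :
    mtaRun μ (.node (.inr σ) ts) s = B σ iv s.2 := by
  show (Matrix.vecMul _ (μ (.inr σ))) s = _
  rw [hμ2]; simp only [Matrix.vecMul]
  classical
  have hprod : ∀ i : Fin (rkA rks (.inr σ)) → Fin 2 × Fin n,
      (∏ l, mtaRun μ (ts l) (i l)) =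
        if i = (fun l : Fin (rkA rks (.inr σ)) => ((0 : Fin 2), iv l)) then 1 else 0 := by
    intro i
    split_ifs with hi
    · subst hi; simp [h]
    · obtain ⟨l, hl⟩ := Function.ne_iff.mp hi
      exact Finset.prod_eq_zero (Finset.mem_univ l) (by rw [h]; simp [hl])
  simp only [dotProduct]
  simp_rw [hprod, ite_mul, one_mul, zero_mul, Finset.sum_ite_eq' Finset.univ,
    Finset.mem_univ, if_true]
  have hprod2 : ∀ jv : Fin (rks σ) → Fin n,
      (∏ l : Fin (rks σ), if iv l = jv l then (1 : F) else 0) =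
        if jv = iv then 1 else 0 := by
    intro jv
    by_cases hjv : jv = iv
    · subst hjv; simp
    · rw [if_neg hjv]
      obtain ⟨l, hl⟩ := Function.ne_iff.mp hjv
      exact Finset.prod_eq_zero (Finset.mem_univ l) (if_neg (fun h => hl h.symm))
  simp_rw [hprod2, ite_mul, one_mul, zero_mul, Finset.sum_ite_eq' Finset.univ,
    Finset.mem_univ, if_true]

end Aux2

/-- in the lower-bound construction with `2n` states
(`S = Fin 2 × Fin n`), where `μ(σ₀) = [1 0] ⊗ e₁`, `μ(σ₁) = I₂ ⊗ P` and, for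
each `k`-ary `σ ∉ {σ₀,σ₁}`, `μ(σ) = [1 1] ⊗ ([I_n; −I_n]^{⊗k} · B(σ))`, and
`γ = [1 0]ᵀ ⊗ e₁ᵀ`, the recognised series satisfies
`‖A‖(σ₁^j(σ(σ₁^{i₁}(σ₀),…,σ₁^{i_k}(σ₀)))) = B(σ)_{(i₁,…,i_k), −j}`
(with 0-based indices; `−j = (n−j) mod n` is the column `(1+n−j) mod n` of the
paper's 1-based indexing). -/
theorem lower_bound_weight_general {Sg : Type} (rks : Sg → ℕ) {F : Type}
    [Field F] (n : ℕ) [NeZero n]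
    (μ : ∀ a : Bool ⊕ Sg, Matrix (Fin (rkA rks a) → Fin 2 × Fin n) (Fin 2 × Fin n) F)
    (B : ∀ σ : Sg, Matrix (Fin (rks σ) → Fin n) (Fin n) F)
    (hμ0 : μ (.inl false) =
      fun _ s => if s.1 = 0 ∧ s.2 = 0 then 1 else 0)
    (hμ1 : μ (.inl true) =
      fun i s => if s.1 = (i ((0 : Fin 1))).1 ∧ s.2 = (i ((0 : Fin 1))).2 + 1 then 1 else 0)
    (hμ2 : ∀ σ : Sg, μ (.inr σ) =
      fun i s =>
        ∑ jv : Fin (rks σ) → Fin n,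
          (∏ l, if (i l).2 = jv l then (if (i l).1 = 0 then (1 : F) else -1) else 0) *
            B σ jv s.2) :
    ∀ (σ : Sg) (j : Fin n) (iv : Fin (rks σ) → Fin n),
      (∑ s, mtaRun μ
          (s1^[(j : ℕ)]
            (RTree.node (.inr σ) (fun l => s1^[((iv l : ℕ))] (leaf0 rks)))) s *
          (if s.1 = 0 ∧ s.2 = 0 then (1 : F) else 0)) =
        B σ iv (-j) := by
  intro σ j iv
  have hts : ∀ (l : Fin (rkA rks (.inr σ))) (p : Fin 2 × Fin n),
      mtaRun μ ((fun l => s1^[((iv l : ℕ))] (leaf0 rks)) l) p =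
        if p = ((0 : Fin 2), iv l) then 1 else 0 := by
    intro l p
    rw [run_s1_iter μ hμ1, run_leaf0 μ hμ0]
    open Fin.NatCast in
    have : ((p.1, p.2 - ((iv l : ℕ) : Fin n)).1 = 0 ∧ (p.1, p.2 - ((iv l : ℕ) : Fin n)).2 = 0)
        ↔ p = ((0 : Fin 2), iv l) := by
      simp [Prod.ext_iff, sub_eq_zero, Fin.cast_val_eq_self]
    simp only [this]
  have hrun : ∀ s : Fin 2 × Fin n,
      mtaRun μ (s1^[(j : ℕ)]
        (RTree.node (.inr σ) (fun l => s1^[((iv l : ℕ))] (leaf0 rks)))) s =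
        B σ iv (s.2 - j) := by
    intro s
    rw [run_s1_iter μ hμ1]
    exact (run_node μ B hμ2 σ iv _ hts _).trans (by rw [Fin.cast_val_eq_self])
  simp_rw [hrun]
  have hcond : ∀ s : Fin 2 × Fin n, (s.1 = 0 ∧ s.2 = 0) ↔ s = ((0 : Fin 2), (0 : Fin n)) :=
    fun s => by simp [Prod.ext_iff]
  simp_rw [hcond, mul_ite, mul_one, mul_zero, Finset.sum_ite_eq' Finset.univ,
    Finset.mem_univ, if_true]
  simp
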